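/- Let G be a profinite group and w = w(x₁,…,x_k) a group word. Then the abstract verbal subgroup w(G), generated algebraically by all values w(g₁,…,g_k) with g_i ∈ G, is closed in G if and only if there exists a natural number n such that w has width n in every continuous finite quotient of G, i.e. in every quotient Q = G/N with N an open normal subgroup, every element of w(Q) is a product of n elements of the form w(q₁,…,q_k)^{±1}. -/

import Mathlib

/-- The set of `w`-values in `G`: elements of the form `w(g₁,…,g_k)^{±1}`. -/
def wordValues {k : ℕ} (w : FreeGroup (Fin k)) (G : Type*) [Group G] : Set G :=
  {x : G | ∃ g : Fin k → G, FreeGroup.lift g w = x ∨ (FreeGroup.lift g w)⁻¹ = x}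

/-- The verbal subgroup `w(G)`: the subgroup generated *algebraically* by all values of
the word `w` in `G`. -/
def verbalSubgroup {k : ℕ} (w : FreeGroup (Fin k)) (G : Type*) [Group G] : Subgroup G :=
  Subgroup.closure (wordValues w G)

/-- The word `w` has width `n` in `G` if every element of the verbal subgroup `w(G)` is a
product of `n` `w`-values. -/
def HasWidth {k : ℕ} (w : FreeGroup (Fin k)) (G : Type*) [Group G] (n : ℕ) : Prop :=
  ∀ x ∈ verbalSubgroup w G, ∃ l : List G,
    l.length = n ∧ (∀ y ∈ l, y ∈ wordValues w G) ∧ l.prod = x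

namespace Hartley
open Pointwise

variable {k : ℕ} {w : FreeGroup (Fin k)}

/-- Products of exactly `n` word values. -/
def S (w : FreeGroup (Fin k)) (G : Type*) [Group G] (n : ℕ) : Set G :=
  {x | ∃ l : List G, l.length = n ∧ (∀ y ∈ l, y ∈ wordValues w G) ∧ l.prod = x}

lemma one_mem_wv (G : Type*) [Group G] : (1:G) ∈ wordValues w G := by
  refine ⟨fun _ => 1, Or.inl ?_⟩
  have h : (FreeGroup.lift (fun _ : Fin k => (1:G))) = 1 :=
    FreeGroup.ext_hom _ _ (by simp)
  rw [h]; rfl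

lemma inv_mem_wv {G : Type*} [Group G] {x : G} (h : x ∈ wordValues w G) :
    x⁻¹ ∈ wordValues w G := by
  obtain ⟨g, h | h⟩ := h
  · exact ⟨g, Or.inr (by rw [h])⟩
  · exact ⟨g, Or.inl (by rw [← h, inv_inv])⟩

lemma mem_verbal_iff {G : Type*} [Group G] {x : G} :
    x ∈ verbalSubgroup w G ↔
      ∃ l : List G, (∀ y ∈ l, y ∈ wordValues w G) ∧ l.prod = x := by
  constructor
  · intro hx
    induction hx using Subgroup.closure_induction with
    | mem y hy => exact ⟨[y], by simpa using hy, by simp⟩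
    | one => exact ⟨[], by simp, by simp⟩
    | mul a b _ _ iha ihb =>
      obtain ⟨la, hla, hpa⟩ := iha
      obtain ⟨lb, hlb, hpb⟩ := ihb
      exact ⟨la ++ lb, by aesop, by simp [hpa, hpb]⟩
    | inv a _ ih =>
      obtain ⟨l, hl, hp⟩ := ih
      refine ⟨(l.map fun y => y⁻¹).reverse, ?_, by rw [← List.prod_inv_reverse, hp]⟩
      intro y hy
      simp only [List.mem_reverse, List.mem_map] at hy
      obtain ⟨z, hz, rfl⟩ := hy
      exact inv_mem_wv (hl z hz)
  · rintro ⟨l, hl, rfl⟩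
    exact list_prod_mem fun y hy => Subgroup.subset_closure (hl y hy)

lemma S_mono {G : Type*} [Group G] {a b : ℕ} (h : a ≤ b) : S w G a ⊆ S w G b := by
  rintro x ⟨l, hlen, hmem, hprod⟩
  refine ⟨l ++ List.replicate (b - a) 1, by simp [hlen]; omega, ?_, by simp [hprod]⟩
  intro y hy
  rcases List.mem_append.1 hy with hy | hy
  · exact hmem y hy
  · rw [List.eq_of_mem_replicate hy]; exact one_mem_wv G

lemma S_subset_verbal {G : Type*} [Group G] (n : ℕ) :
    S w G n ⊆ (verbalSubgroup w G : Subgroup G) := by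
  rintro x ⟨l, _, hmem, rfl⟩
  exact list_prod_mem fun y hy => Subgroup.subset_closure (hmem y hy)

lemma continuous_liftw {G : Type*} [Group G] [TopologicalSpace G] [IsTopologicalGroup G] :
    Continuous fun g : Fin k → G => FreeGroup.lift g w := by
  induction w using FreeGroup.induction_on with
  | C1 =>
    have h : ∀ g : Fin k → G, FreeGroup.lift g (1 : FreeGroup (Fin k)) = 1 :=
      fun g => map_one _
    simp only [h]; exact continuous_const
  | of a =>
    have h : ∀ g : Fin k → G, FreeGroup.lift g (FreeGroup.of a) = g a :=
      fun g => FreeGroup.lift_apply_of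
    simp only [h]; exact continuous_apply a
  | inv_of a _ =>
    have h : ∀ g : Fin k → G, FreeGroup.lift g (FreeGroup.of a)⁻¹ = (g a)⁻¹ :=
      fun g => by rw [map_inv]; exact congrArg Inv.inv FreeGroup.lift_apply_of
    simp only [h]; exact (continuous_apply a).inv
  | mul x y ihx ihy =>
    have h : ∀ g : Fin k → G, FreeGroup.lift g (x * y) =
        FreeGroup.lift g x * FreeGroup.lift g y := fun g => map_mul _ _ _
    simp only [h]; exact ihx.mul ihy

lemma isCompact_S {G : Type*} [Group G] [TopologicalSpace G] [IsTopologicalGroup G]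
    [CompactSpace G] (n : ℕ) : IsCompact (S w G n) := by
  have hwv : IsCompact (wordValues w G) := by
    have h1 : IsCompact (Set.range fun g : Fin k → G => FreeGroup.lift g w) :=
      isCompact_range continuous_liftw
    have h2 : IsCompact (Set.range fun g : Fin k → G => (FreeGroup.lift g w)⁻¹) :=
      isCompact_range continuous_liftw.inv
    have : wordValues w G = (Set.range fun g : Fin k → G => FreeGroup.lift g w) ∪
        (Set.range fun g : Fin k → G => (FreeGroup.lift g w)⁻¹) := by
      ext x
      constructor
      · rintro ⟨g, h | h⟩
        · exact Or.inl ⟨g, h⟩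
        · exact Or.inr ⟨g, h⟩
      · rintro (⟨g, h⟩ | ⟨g, h⟩)
        · exact ⟨g, Or.inl h⟩
        · exact ⟨g, Or.inr h⟩
    rw [this]; exact h1.union h2
  have hF : Continuous fun v : Fin n → G => (List.ofFn v).prod := by
    have he : (fun v : Fin n → G => (List.ofFn v).prod) =
        fun v => ((List.finRange n).map fun i => v i).prod := by
      funext v; rw [List.ofFn_eq_map]
    rw [he]
    exact continuous_list_prod _ fun i _ => continuous_apply i
  have hset : S w G n = (fun v : Fin n → G => (List.ofFn v).prod) ''
      (Set.univ.pi fun _ => wordValues w G) := by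
    ext x
    constructor
    · rintro ⟨l, rfl, hmem, rfl⟩
      exact ⟨l.get, fun i _ => hmem _ (l.get_mem i), by simp [List.ofFn_get]⟩
    · rintro ⟨v, hv, rfl⟩
      exact ⟨List.ofFn v, List.length_ofFn, fun y hy => by
        obtain ⟨i, rfl⟩ := List.mem_ofFn.1 hy
        exact hv i trivial, rfl⟩
  rw [hset]
  exact (isCompact_univ_pi fun _ => hwv).image hF

section Maps

variable {G H : Type*} [Group G] [Group H]

lemma map_liftw (f : G →* H) (g : Fin k → G) :
    f (FreeGroup.lift g w) = FreeGroup.lift (⇑f ∘ g) w := by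
  have h : f.comp (FreeGroup.lift g) = FreeGroup.lift (⇑f ∘ g) :=
    FreeGroup.ext_hom _ _ (by simp)
  exact DFunLike.congr_fun h w

lemma mem_wv_map (f : G →* H) {x : G} (hx : x ∈ wordValues w G) :
    f x ∈ wordValues w H := by
  obtain ⟨g, h | h⟩ := hx
  · exact ⟨⇑f ∘ g, Or.inl (by rw [← h, map_liftw])⟩
  · exact ⟨⇑f ∘ g, Or.inr (by rw [← h, map_inv, map_liftw])⟩

lemma wv_surj (f : G →* H) (hf : Function.Surjective f) {y : H}
    (hy : y ∈ wordValues w H) : ∃ x ∈ wordValues w G, f x = y := by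
  obtain ⟨g, h | h⟩ := hy
  · choose g' hg' using fun i => hf (g i)
    refine ⟨FreeGroup.lift g' w, ⟨g', Or.inl rfl⟩, ?_⟩
    have he : (⇑f ∘ g') = g := funext hg'
    rw [map_liftw, he, h]
  · choose g' hg' using fun i => hf (g i)
    refine ⟨(FreeGroup.lift g' w)⁻¹, ⟨g', Or.inr rfl⟩, ?_⟩
    have he : (⇑f ∘ g') = g := funext hg'
    rw [map_inv, map_liftw, he, h]

lemma list_lift (f : G →* H) (hf : Function.Surjective f) :
    ∀ l' : List H, (∀ y ∈ l', y ∈ wordValues w H) →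
      ∃ l : List G, (∀ y ∈ l, y ∈ wordValues w G) ∧ l.map f = l' := by
  intro l'
  induction l' with
  | nil => exact fun _ => ⟨[], by simp, by simp⟩
  | cons a l ih =>
    intro h
    obtain ⟨x, hx, hfx⟩ := wv_surj f hf (h a (by simp))
    obtain ⟨l₀, hl₀, hml₀⟩ := ih fun y hy => h y (by simp [hy])
    refine ⟨x :: l₀, ?_, by simp [hfx, hml₀]⟩
    intro y hy
    rcases List.mem_cons.1 hy with rfl | hy
    · exact hx
    · exact hl₀ y hy

/-- Width passes to quotients (any surjective image). -/
lemma hasWidth_of_surjective (f : G →* H) (hf : Function.Surjective f) {m : ℕ}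
    (hm : ∀ x ∈ verbalSubgroup w G, x ∈ S w G m) : HasWidth w H m := by
  intro y hy
  obtain ⟨l', hl', hp'⟩ := mem_verbal_iff.mp hy
  obtain ⟨l, hl, hml⟩ := list_lift f hf l' hl'
  have hlG : l.prod ∈ verbalSubgroup w G :=
    list_prod_mem fun z hz => Subgroup.subset_closure (hl z hz)
  obtain ⟨lm, hlm1, hlm2, hlm3⟩ := hm _ hlG
  refine ⟨lm.map f, by simp [hlm1], ?_, ?_⟩
  · intro z hz
    obtain ⟨z₀, hz₀, rfl⟩ := List.mem_map.1 hz
    exact mem_wv_map f (hlm2 z₀ hz₀)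
  · rw [← map_list_prod, hlm3, ← hp', ← hml, map_list_prod]

end Maps

/-- Baire-category step: if the verbal subgroup is closed then the word has finite
width in `G` itself. -/
lemma exists_width_of_closed (G : Type*) [Group G] [TopologicalSpace G]
    [IsTopologicalGroup G] [CompactSpace G] [T2Space G]
    (hc : IsClosed ((verbalSubgroup w G : Subgroup G) : Set G)) :
    ∃ m, ∀ x ∈ verbalSubgroup w G, x ∈ S w G m := by
  set W := verbalSubgroup w G with hW
  haveI : CompactSpace ↥W := isCompact_iff_compactSpace.mp hc.isCompact
  set f : ℕ → Set ↥W := fun n => Subtype.val ⁻¹' S w G n with hf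
  have hfc : ∀ n, IsClosed (f n) := fun n =>
    ((isCompact_S n).isClosed).preimage continuous_subtype_val
  have hfU : ⋃ n, f n = Set.univ := by
    ext x
    simp only [Set.mem_iUnion, Set.mem_univ, iff_true]
    obtain ⟨l, hl, hp⟩ := mem_verbal_iff.mp x.2
    exact ⟨l.length, l, rfl, hl, hp⟩
  haveI : Nonempty ↥W := ⟨1, one_mem _⟩
  obtain ⟨n, u, hu⟩ := nonempty_interior_of_iUnion_of_closed hfc hfU
  set T := interior (f n) with hT
  have hTopen : IsOpen T := isOpen_interior
  have hcover : Set.univ ⊆ ⋃ g : ↥W, (g * u⁻¹) • T := by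
    intro x _
    refine Set.mem_iUnion.2 ⟨x, ?_⟩
    refine Set.mem_smul_set.2 ⟨u, hu, ?_⟩
    simp [smul_eq_mul]
  obtain ⟨t, ht⟩ := isCompact_univ.elim_finite_subcover
    (fun g : ↥W => (g * u⁻¹) • T) (fun g => hTopen.smul _) hcover
  classical
  have hlist : ∀ g : ↥W, ∃ l : List G,
      (∀ y ∈ l, y ∈ wordValues w G) ∧ l.prod = (g : G) :=
    fun g => mem_verbal_iff.mp g.2
  choose listOf hmemOf hprodOf using hlist
  refine ⟨(t.sup fun g => (listOf g).length) + n + n, ?_⟩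
  intro x hx
  have hxW : (⟨x, hx⟩ : ↥W) ∈ ⋃ g ∈ t, (g * u⁻¹) • T := ht (Set.mem_univ _)
  obtain ⟨g, hgt, hg⟩ := Set.mem_iUnion₂.1 hxW
  obtain ⟨b, hbT, hb⟩ := Set.mem_smul_set.1 hg
  have hbS : (b : G) ∈ S w G n := interior_subset (s := f n) hbT
  have huS : (u : G) ∈ S w G n := interior_subset (s := f n) hu
  obtain ⟨lb, hlb1, hlb2, hlb3⟩ := hbS
  obtain ⟨lu, hlu1, hlu2, hlu3⟩ := huS
  have hxeq : x = (g : G) * (u : G)⁻¹ * (b : G) := by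
    have := congrArg (Subtype.val) hb
    simp only [smul_eq_mul] at this
    exact this.symm
  have hmem : x ∈ S w G ((listOf g).length + n + n) := by
    refine ⟨listOf g ++ (lu.map fun y => y⁻¹).reverse ++ lb, ?_, ?_, ?_⟩
    · simp [hlu1, hlb1]; omega
    · intro y hy
      simp only [List.mem_append, List.mem_reverse, List.mem_map] at hy
      rcases hy with (hy | ⟨z, hz, rfl⟩) | hy
      · exact hmemOf g y hy
      · exact inv_mem_wv (hlu2 z hz)
      · exact hlb2 y hy
    · rw [List.prod_append, List.prod_append, hprodOf, ← List.prod_inv_reverse,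
        hlu3, hlb3, hxeq]
  exact S_mono (by
    have : (listOf g).length ≤ t.sup fun g => (listOf g).length :=
      Finset.le_sup (f := fun g => (listOf g).length) hgt
    omega) hmem

end Hartley

open Hartley in
/-- **(B. Hartley)** Let `G` be a profinite group and `w` a group word. The (algebraic)
verbal subgroup `w(G)` is closed in `G` if and only if there is `n` such that `w` has
width `n` in every continuous finite quotient of `G`, i.e. in every quotient `G/N` with
`N` an open normal subgroup. -/
theorem verbal_subgroup_closed_iff_uniform_width
    (G : Type*) [Group G] [TopologicalSpace G] [IsTopologicalGroup G]
    [CompactSpace G] [T2Space G] [TotallyDisconnectedSpace G]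
    {k : ℕ} (w : FreeGroup (Fin k)) :
    IsClosed ((verbalSubgroup w G : Subgroup G) : Set G) ↔
      ∃ n : ℕ, ∀ (N : Subgroup G) (_ : N.Normal), IsOpen (N : Set G) →
        HasWidth w (G ⧸ N) n := by
  constructor
  · intro hc
    obtain ⟨m, hm⟩ := exists_width_of_closed G hc
    refine ⟨m, fun N hN _ => ?_⟩
    exact hasWidth_of_surjective (QuotientGroup.mk' N) (QuotientGroup.mk'_surjective N) hm
  · rintro ⟨n, hn⟩
    have hSeq : ((verbalSubgroup w G : Subgroup G) : Set G) = S w G n := by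
      apply Set.Subset.antisymm
      · intro x hx
        by_contra hxS
        have hSc : IsClosed (S w G n) := (isCompact_S n).isClosed
        have hUopen : IsOpen ((fun y => x * y) ⁻¹' (S w G n)ᶜ) :=
          hSc.isOpen_compl.preimage (continuous_mul_left x)
        have h1U : (1:G) ∈ (fun y => x * y) ⁻¹' (S w G n)ᶜ := by
          simpa using hxS
        obtain ⟨V, hVclopen, h1V, hVU⟩ := compact_exists_isClopen_in_isOpen hUopen h1U
        obtain ⟨N, hNV⟩ :=
          IsTopologicalGroup.exist_openNormalSubgroup_sub_clopen_nhds_of_one hVclopen h1V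
        haveI hNnormal : N.toSubgroup.Normal := N.isNormal'
        have hwidth : HasWidth w (G ⧸ N.toSubgroup) n :=
          hn N.toSubgroup hNnormal N.toOpenSubgroup.isOpen
        set π := QuotientGroup.mk' N.toSubgroup with hπ
        have hπx : π x ∈ verbalSubgroup w (G ⧸ N.toSubgroup) := by
          obtain ⟨l, hl, hp⟩ := mem_verbal_iff.mp hx
          refine mem_verbal_iff.mpr ⟨l.map π, ?_, by rw [← map_list_prod, hp]⟩
          intro y hy
          obtain ⟨z, hz, rfl⟩ := List.mem_map.1 hy
          exact mem_wv_map π (hl z hz)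
        obtain ⟨l', hl'1, hl'2, hl'3⟩ := hwidth _ hπx
        obtain ⟨l, hl, hml⟩ := list_lift π (QuotientGroup.mk'_surjective _) l' hl'2
        have hlen : l.length = n := by
          have := congrArg List.length hml
          simpa [hl'1] using this
        have hπprod : π l.prod = π x := by
          rw [map_list_prod, hml, hl'3]
        have hmemN : x⁻¹ * l.prod ∈ N.toSubgroup := by
          have heq : ((x : G) : G ⧸ N.toSubgroup) = (l.prod : G) := by
            exact hπprod.symm
          exact (QuotientGroup.eq (s := N.toSubgroup)).mp heq
        have : x * (x⁻¹ * l.prod) ∉ S w G n := by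
          have hmemV : x⁻¹ * l.prod ∈ V := hNV hmemN
          have := hVU hmemV
          simpa using this
        simp only [mul_inv_cancel_left] at this
        exact this ⟨l, hlen, hl, rfl⟩
      · exact S_subset_verbal n
    rw [hSeq]
    exact (isCompact_S n).isClosed
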